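/- For the exponential-rate selections of the Peano example, the resolvent functionals satisfy J_{λ,f}(P_0^a) − J_{λ,f}(P_0^b) = λ(b−a)/((λ+a)(λ+b)) · (J_{λ,f}(P_0^0) − J_{λ,f}(P_0^∞)) for all rates a, b ∈ [0,∞) and all λ > 0; consequently for each λ and f, the map a ↦ J_{λ,f}(P_0^a) is monotone and attains its extrema only at a = 0 and a = ∞. -/

import Mathlib

open MeasureTheory

open MeasureTheory Set Filter

lemma myExpDeriv (c x : ℝ) (hc : 0 < c) :
    HasDerivAt (fun x => -Real.exp (-c * x) / c) (Real.exp (-c * x)) x := by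
  have h1 : HasDerivAt (fun x : ℝ => -c * x) (-c) x := by
    simpa using (hasDerivAt_id x).const_mul (-c)
  have h2 := (Real.hasDerivAt_exp (-c * x)).comp x h1
  have h3 := (h2.neg).div_const c
  refine h3.congr_deriv ?_
  field_simp

lemma myExpInt (c : ℝ) (hc : 0 < c) :
    ∫ x in Set.Ioi (0:ℝ), Real.exp (-c * x) = 1 / c := by
  have := integral_Ioi_of_hasDerivAt_of_tendsto' (a := 0)
    (f := fun x => -Real.exp (-c * x) / c) (f' := fun x => Real.exp (-c * x)) (m := 0)
    (fun x _ => myExpDeriv c x hc) (exp_neg_integrableOn_Ioi 0 hc) ?_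
  · rw [this]; field_simp; simp
  · have h0 : Tendsto (fun x : ℝ => Real.exp (-c * x)) atTop (nhds 0) := by
      have h1 : Tendsto (fun x : ℝ => -c * x) atTop atBot :=
        Tendsto.const_mul_atTop_of_neg (neg_neg_of_pos hc) tendsto_id
      exact Real.tendsto_exp_atBot.comp h1
    simpa using (h0.neg).div_const c

lemma myExpIntIoc (c s : ℝ) (hc : 0 < c) (hs : 0 ≤ s) :
    ∫ x in Set.Ioc (0:ℝ) s, Real.exp (-c * x) = (1 - Real.exp (-c * s)) / c := by
  rw [← intervalIntegral.integral_of_le hs,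
    intervalIntegral.integral_eq_sub_of_hasDerivAt
      (f := fun x => -Real.exp (-c * x) / c) (fun x _ => myExpDeriv c x hc)
      ((intervalIntegrable_iff_integrableOn_Ioc_of_le hs).2
        ((exp_neg_integrableOn_Ioi 0 hc).mono_set Ioc_subset_Ioi_self))]
  simp
  ring


/-- The distinguished solution of `Ẋ = -X + √X` starting at `0`. -/
noncomputable def peanoXstar (t : ℝ) : ℝ := (1 - Real.exp (-t / 2)) ^ 2

/-- The resolvent functional `J_{λ,f}(P_0^a)` of the exponential-rate-`a` selection started
at `0` (rate `a = 0` corresponds to the solution staying at `0` forever). -/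
noncomputable def peanoJ (l : ℝ) (f : ℝ → ℝ) (a : ℝ) : ℝ :=
  if a = 0 then f 0 / l
  else ∫ s in Set.Ioi (0:ℝ),
    a * Real.exp (-a * s) *
      ∫ t in Set.Ioi (0:ℝ), Real.exp (-l * t) * f (peanoXstar (max (t - s) 0))

/-- The resolvent functional `J_{λ,f}(P_0^∞)` of the immediate-departure selection. -/
noncomputable def peanoJinf (l : ℝ) (f : ℝ → ℝ) : ℝ :=
  ∫ t in Set.Ioi (0:ℝ), Real.exp (-l * t) * f (peanoXstar t)

lemma peanoXstar_cont : Continuous peanoXstar := by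
  unfold peanoXstar; fun_prop

lemma peanoXstar_zero : peanoXstar 0 = 0 := by simp [peanoXstar]

section

variable {l : ℝ} {f : ℝ → ℝ} {M : ℝ}

lemma intOn (hl : 0 < l) (hf : Measurable f) (hM : ∀ y, |f y| ≤ M)
    (g : ℝ → ℝ) (hg : Measurable g) {S : Set ℝ} (hS : S ⊆ Set.Ioi (0:ℝ)) :
    IntegrableOn (fun t => Real.exp (-l * t) * f (g t)) S := by
  have h1 : IntegrableOn (fun t => Real.exp (-l * t)) S :=
    (exp_neg_integrableOn_Ioi 0 hl).mono_set hS
  have h2 : IntegrableOn (fun t => f (g t) * Real.exp (-l * t)) S :=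
    h1.bdd_mul ((hf.comp hg).aestronglyMeasurable)
      (Filter.Eventually.of_forall fun x => by simpa [Real.norm_eq_abs] using hM (g x))
  simpa [mul_comm] using h2

lemma inner_eq (hl : 0 < l) (hf : Measurable f) (hM : ∀ y, |f y| ≤ M)
    {s : ℝ} (hs : 0 < s) :
    (∫ t in Set.Ioi (0:ℝ), Real.exp (-l * t) * f (peanoXstar (max (t - s) 0)))
      = f 0 / l + Real.exp (-l * s) * (peanoJinf l f - f 0 / l) := by
  have hg : Measurable fun t : ℝ => peanoXstar (max (t - s) 0) :=
    peanoXstar_cont.measurable.comp ((measurable_id.sub_const s).max measurable_const)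
  have hI : IntegrableOn
      (fun t => Real.exp (-l * t) * f (peanoXstar (max (t - s) 0))) (Set.Ioi 0) :=
    intOn hl hf hM _ hg (subset_refl _)
  have hsub1 : Set.Ioc (0:ℝ) s ⊆ Set.Ioi 0 := Set.Ioc_subset_Ioi_self
  have hsub2 : Set.Ioi s ⊆ Set.Ioi (0:ℝ) := Set.Ioi_subset_Ioi hs.le
  rw [← Set.Ioc_union_Ioi_eq_Ioi hs.le,
    setIntegral_union (Set.Ioc_disjoint_Ioi le_rfl) measurableSet_Ioi
      (hI.mono_set hsub1) (hI.mono_set hsub2)]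
  have part1 : (∫ t in Set.Ioc (0:ℝ) s,
      Real.exp (-l * t) * f (peanoXstar (max (t - s) 0)))
      = f 0 * ((1 - Real.exp (-l * s)) / l) := by
    rw [setIntegral_congr_fun measurableSet_Ioc
      (g := fun t => Real.exp (-l * t) * f 0)
      (fun t ht => by
        rw [max_eq_right (sub_nonpos.2 ht.2), peanoXstar_zero]),
      integral_mul_const, myExpIntIoc l s hl hs.le, mul_comm]
  have part2 : (∫ t in Set.Ioi s,
      Real.exp (-l * t) * f (peanoXstar (max (t - s) 0)))
      = Real.exp (-l * s) * peanoJinf l f := by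
    rw [setIntegral_congr_fun measurableSet_Ioi
      (g := fun t => Real.exp (-l * t) * f (peanoXstar (t - s)))
      (fun t ht => by
        rw [max_eq_left (sub_nonneg.2 (le_of_lt ht))])]
    have hemb : MeasurableEmbedding (fun x : ℝ => x + s) :=
      (MeasurableEquiv.addRight s).measurableEmbedding
    have hmp : MeasurePreserving (fun x : ℝ => x + s) volume volume :=
      measurePreserving_add_right volume s
    have htr := hmp.setIntegral_preimage_emb hemb
      (fun t => Real.exp (-l * t) * f (peanoXstar (t - s))) (Set.Ioi s)
    have hpre : (fun x : ℝ => x + s) ⁻¹' (Set.Ioi s) = Set.Ioi 0 := by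
      ext x; simp
    rw [hpre] at htr
    rw [← htr]
    rw [setIntegral_congr_fun measurableSet_Ioi
      (g := fun x => Real.exp (-l * s) * (Real.exp (-l * x) * f (peanoXstar x)))
      (fun x _ => by
        have : -l * (x + s) = -l * s + -l * x := by ring
        simp only [add_sub_cancel_right, this, Real.exp_add]
        ring),
      integral_const_mul]
    rfl
  rw [part1, part2]
  field_simp
  ring

lemma peanoJ_zero : peanoJ l f 0 = f 0 / l := by simp [peanoJ]

lemma peanoJ_key (hl : 0 < l) (hf : Measurable f) (hM : ∀ y, |f y| ≤ M)
    {a : ℝ} (ha : 0 ≤ a) :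
    peanoJ l f a = f 0 / l + a / (l + a) * (peanoJinf l f - f 0 / l) := by
  rcases eq_or_lt_of_le ha with rfl|ha'
  · simp [peanoJ]
  · have hla : (0:ℝ) < l + a := by linarith
    rw [peanoJ, if_neg (ne_of_gt ha')]
    rw [setIntegral_congr_fun measurableSet_Ioi
      (g := fun s => (a * (f 0 / l)) * Real.exp (-a * s)
        + (a * (peanoJinf l f - f 0 / l)) * Real.exp (-(a + l) * s))
      (fun x hx => by
        have he : Real.exp (-(a + l) * x) = Real.exp (-a * x) * Real.exp (-l * x) := by
          rw [← Real.exp_add]; ring_nf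
        rw [inner_eq hl hf hM (Set.mem_Ioi.1 hx)]
        simp only [he]
        ring)]
    rw [integral_add ((exp_neg_integrableOn_Ioi 0 ha').const_mul _)
        ((exp_neg_integrableOn_Ioi 0 (by linarith : (0:ℝ) < a + l)).const_mul _),
      integral_const_mul, integral_const_mul, myExpInt a ha',
      myExpInt _ (by linarith : (0:ℝ) < a + l)]
    have h1 : a ≠ 0 := ne_of_gt ha'
    have h2 : l ≠ 0 := ne_of_gt hl
    have h3 : a + l ≠ 0 := by positivity
    have h4 : l + a ≠ 0 := ne_of_gt hla
    field_simp
    ring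

end

/-- For the exponential-rate selections of the Peano example, the resolvent functionals
satisfy
`J_{λ,f}(P_0^a) − J_{λ,f}(P_0^b) = λ(b−a)/((λ+a)(λ+b)) (J_{λ,f}(P_0^0) − J_{λ,f}(P_0^∞))`;
consequently `a ↦ J_{λ,f}(P_0^a)` is monotone and its extrema are attained only at the
degenerate rates `a = 0` and `a = ∞`. -/
theorem stmt_12 (l : ℝ) (hl : 0 < l) (f : ℝ → ℝ) (hf : Measurable f)
    (hfb : ∃ M, ∀ y, |f y| ≤ M) :
    (∀ a b : ℝ, 0 ≤ a → 0 ≤ b →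
      peanoJ l f a - peanoJ l f b =
        l * (b - a) / ((l + a) * (l + b)) * (peanoJ l f 0 - peanoJinf l f)) ∧
    (MonotoneOn (peanoJ l f) (Set.Ici 0) ∨ AntitoneOn (peanoJ l f) (Set.Ici 0)) ∧
    (∀ a : ℝ, 0 ≤ a →
      min (peanoJ l f 0) (peanoJinf l f) ≤ peanoJ l f a ∧
      peanoJ l f a ≤ max (peanoJ l f 0) (peanoJinf l f)) ∧
    (peanoJ l f 0 ≠ peanoJinf l f → ∀ a : ℝ, 0 < a →
      peanoJ l f a ≠ peanoJ l f 0 ∧ peanoJ l f a ≠ peanoJinf l f) := by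
  obtain ⟨M, hM⟩ := hfb
  have key : ∀ a : ℝ, 0 ≤ a →
      peanoJ l f a = f 0 / l + a / (l + a) * (peanoJinf l f - f 0 / l) :=
    fun a ha => peanoJ_key hl hf hM ha
  set D := peanoJinf l f - f 0 / l with hD
  have hJ0 : peanoJ l f 0 = f 0 / l := peanoJ_zero
  have hJinf : peanoJinf l f = f 0 / l + D := by rw [hD]; ring
  have hcnn : ∀ a : ℝ, 0 ≤ a → 0 ≤ a / (l + a) :=
    fun a ha => div_nonneg ha (by linarith)
  have hclt : ∀ a : ℝ, 0 ≤ a → a / (l + a) < 1 :=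
    fun a ha => (div_lt_one (by linarith)).2 (by linarith)
  have hcmono : ∀ x y : ℝ, 0 ≤ x → 0 ≤ y → x ≤ y → x / (l + x) ≤ y / (l + y) := by
    intro x y hx hy hxy
    rw [div_le_div_iff₀ (by linarith) (by linarith)]
    nlinarith
  refine ⟨?_, ?_, ?_, ?_⟩
  · intro a b ha hb
    rw [key a ha, key b hb, hJ0, hJinf]
    have h1 : l + a ≠ 0 := by positivity
    have h2 : l + b ≠ 0 := by positivity
    field_simp
    ring
  · rcases le_or_gt 0 D with hd | hd
    · left
      intro x hx y hy hxy
      rw [key x hx, key y hy]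
      nlinarith [mul_nonneg (sub_nonneg.2 (hcmono x y hx hy hxy)) hd]
    · right
      intro x hx y hy hxy
      rw [key x hx, key y hy]
      nlinarith [mul_nonneg (sub_nonneg.2 (hcmono x y hx hy hxy)) (le_of_lt (neg_pos.2 hd))]
  · intro a ha
    rw [key a ha, hJ0, hJinf]
    have h0 := hcnn a ha
    have h1 := (hclt a ha).le
    have hm1 : min (f 0 / l) (f 0 / l + D) ≤ f 0 / l := min_le_left _ _
    have hm2 : min (f 0 / l) (f 0 / l + D) ≤ f 0 / l + D := min_le_right _ _
    have hM1 : f 0 / l ≤ max (f 0 / l) (f 0 / l + D) := le_max_left _ _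
    have hM2 : f 0 / l + D ≤ max (f 0 / l) (f 0 / l + D) := le_max_right _ _
    constructor
    · nlinarith [mul_nonneg (sub_nonneg.2 hm1) (sub_nonneg.2 h1),
        mul_nonneg (sub_nonneg.2 hm2) h0]
    · nlinarith [mul_nonneg (sub_nonneg.2 hM1) (sub_nonneg.2 h1),
        mul_nonneg (sub_nonneg.2 hM2) h0]
  · intro hne a ha
    have hDne : D ≠ 0 := by
      intro h
      apply hne
      rw [hJ0, hJinf, h, add_zero]
    have hc0 : 0 < a / (l + a) := div_pos ha (by linarith)
    have hc1 : a / (l + a) < 1 := hclt a ha.le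
    rw [key a ha.le, hJ0, hJinf]
    constructor
    · intro h
      exact hDne (by
        have : a / (l + a) * D = 0 := by linarith
        rcases mul_eq_zero.1 this with h' | h'
        · exact absurd h' (ne_of_gt hc0)
        · exact h')
    · intro h
      have h2 : (a / (l + a) - 1) * D = 0 := by linarith [h]; 
      rcases mul_eq_zero.1 h2 with h' | h'
      · linarith [sub_eq_zero.1 h']
      · exact hDne h'
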